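/- For every t ≠ 0, every Schwartz function f : ℝ^d → ℂ, and every x ∈ ℝ^d, (e^{itΔ}f)(x) = (2it)^{−d/2} e^{i|x|²/(4t)} · 𝓕( y ↦ e^{i|y|²/(4t)} f(y) )(x/(2t)), where (2it)^{−d/2} := (2|t|)^{−d/2} e^{−i·sgn(t)·dπ/4}. This is the factorization e^{itΔ} = M(t) D(t) 𝓕 M(t), where M(t) is multiplication by e^{i|x|²/(4t)} and [D(t)g](x) := (2it)^{−d/2} g(x/(2t)). -/

import Mathlib

open MeasureTheory ENNReal

noncomputable section

/-- The Fourier transform `𝓕f(ξ) = (2π)^{-d/2} ∫ e^{-ix·ξ} f(x) dx`. -/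
def fourierT {d : ℕ} (f : EuclideanSpace ℝ (Fin d) → ℂ) (ξ : EuclideanSpace ℝ (Fin d)) : ℂ :=
  (((2 * Real.pi) ^ (-(d : ℝ) / 2) : ℝ) : ℂ) *
    ∫ x : EuclideanSpace ℝ (Fin d), Complex.exp (-Complex.I * ((inner ℝ x ξ : ℝ) : ℂ)) * f x

/-- The inverse Fourier transform `𝓕⁻¹g(x) = (2π)^{-d/2} ∫ e^{ix·ξ} g(ξ) dξ`. -/
def invFourierT {d : ℕ} (g : EuclideanSpace ℝ (Fin d) → ℂ) (x : EuclideanSpace ℝ (Fin d)) : ℂ :=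
  (((2 * Real.pi) ^ (-(d : ℝ) / 2) : ℝ) : ℂ) *
    ∫ ξ : EuclideanSpace ℝ (Fin d), Complex.exp (Complex.I * ((inner ℝ x ξ : ℝ) : ℂ)) * g ξ

/-- The free Schrödinger propagator `e^{itΔ}f = 𝓕⁻¹(e^{-it|ξ|²} 𝓕f)`. -/
def schrodingerProp {d : ℕ} (t : ℝ) (f : EuclideanSpace ℝ (Fin d) → ℂ) :
    EuclideanSpace ℝ (Fin d) → ℂ :=
  invFourierT (fun ξ => Complex.exp (-Complex.I * (t : ℂ) * ((‖ξ‖ ^ 2 : ℝ) : ℂ)) * fourierT f ξ)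

open Complex Real Filter Topology
open scoped FourierTransform RealInnerProductSpace

namespace SchrodingerAux

lemma fourierT_eq {d : ℕ} (f : EuclideanSpace ℝ (Fin d) → ℂ) (ξ : EuclideanSpace ℝ (Fin d)) :
    fourierT f ξ = (((2 * Real.pi) ^ (-(d : ℝ) / 2) : ℝ) : ℂ) *
      (𝓕 f) ((2 * Real.pi)⁻¹ • ξ) := by
  rw [fourierT, Real.fourier_eq']
  congr 1
  refine integral_congr_ae (Filter.Eventually.of_forall fun v => ?_)
  simp only [smul_eq_mul, real_inner_smul_right]
  rw [show (-2)*π*((2*π)⁻¹ * (inner ℝ v ξ:ℝ)) = -(inner ℝ v ξ:ℝ) by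
    field_simp]
  congr 1
  push_cast
  ring

lemma fourierT_integrable {d : ℕ} (f : SchwartzMap (EuclideanSpace ℝ (Fin d)) ℂ) :
    Integrable (fourierT ⇑f) := by
  have h : fourierT ⇑f = fun ξ =>
      (((2 * Real.pi) ^ (-(d : ℝ) / 2) : ℝ) : ℂ) *
        (SchwartzMap.fourierTransformCLM ℂ f) ((2 * Real.pi)⁻¹ • ξ) := by
    funext ξ; rw [fourierT_eq, SchwartzMap.fourierTransformCLM_apply, SchwartzMap.fourier_coe]
  rw [h]
  exact ((SchwartzMap.fourierTransformCLM ℂ f).integrable.comp_smul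
    (by positivity : ((2:ℝ) * Real.pi)⁻¹ ≠ 0)).const_mul _

lemma fourierT_continuous {d : ℕ} (f : SchwartzMap (EuclideanSpace ℝ (Fin d)) ℂ) :
    Continuous (fourierT ⇑f) := by
  have h : fourierT ⇑f = fun ξ =>
      (((2 * Real.pi) ^ (-(d : ℝ) / 2) : ℝ) : ℂ) *
        (SchwartzMap.fourierTransformCLM ℂ f) ((2 * Real.pi)⁻¹ • ξ) := by
    funext ξ; rw [fourierT_eq, SchwartzMap.fourierTransformCLM_apply, SchwartzMap.fourier_coe]
  rw [h]
  exact continuous_const.mul ((SchwartzMap.fourierTransformCLM ℂ f).continuous.comp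
    (continuous_const_smul _))

lemma step1 {d : ℕ} (f : SchwartzMap (EuclideanSpace ℝ (Fin d)) ℂ)
    (x : EuclideanSpace ℝ (Fin d)) {b : ℂ} (hb : 0 < b.re) :
    (∫ ξ : EuclideanSpace ℝ (Fin d),
        Complex.exp (-b * ((‖ξ‖^2 : ℝ):ℂ) + Complex.I * ((inner ℝ x ξ : ℝ):ℂ)) * fourierT ⇑f ξ)
      = (((2 * Real.pi) ^ (-(d : ℝ) / 2) : ℝ) : ℂ) * (((Real.pi : ℂ) / b) ^ ((d:ℂ) / 2) *
          ∫ y : EuclideanSpace ℝ (Fin d),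
            Complex.exp (Complex.I^2 * ((‖x - y‖^2 : ℝ):ℂ) / (4*b)) * f y) := by
  set C : ℂ := (((2 * Real.pi) ^ (-(d : ℝ) / 2) : ℝ) : ℂ) with hCdef
  have key : ∀ ξ : EuclideanSpace ℝ (Fin d),
      Complex.exp (-b * ((‖ξ‖^2 : ℝ):ℂ) + Complex.I * ((inner ℝ x ξ : ℝ):ℂ)) * fourierT ⇑f ξ
        = C * ∫ y : EuclideanSpace ℝ (Fin d),
            Complex.exp (-b * ((‖ξ‖^2 : ℝ):ℂ) + Complex.I * ((inner ℝ (x - y) ξ : ℝ):ℂ)) * f y := by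
    intro ξ
    rw [fourierT, mul_left_comm, ← integral_const_mul]
    congr 1
    refine integral_congr_ae (Filter.Eventually.of_forall fun y => ?_)
    simp only [← mul_assoc, ← Complex.exp_add]
    congr 2
    rw [inner_sub_left]
    push_cast
    ring
  rw [integral_congr_ae (Filter.Eventually.of_forall key), integral_const_mul]
  congr 1
  have hint : Integrable (Function.uncurry fun (ξ : EuclideanSpace ℝ (Fin d))
      (y : EuclideanSpace ℝ (Fin d)) =>
        Complex.exp (-b * ((‖ξ‖^2 : ℝ):ℂ) + Complex.I * ((inner ℝ (x - y) ξ : ℝ):ℂ)) * f y)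
      (volume.prod volume) := by
    have hGauss : Integrable (fun v : EuclideanSpace ℝ (Fin d) =>
        ‖Complex.exp (-b * ((‖v‖:ℂ)^2) + 0 * ((inner ℝ (0:EuclideanSpace ℝ (Fin d)) v : ℝ):ℂ))‖) :=
      (GaussianFourier.integrable_cexp_neg_mul_sq_norm_add hb 0 (0:EuclideanSpace ℝ (Fin d))).norm
    have hbd : Integrable (fun p : (EuclideanSpace ℝ (Fin d)) × (EuclideanSpace ℝ (Fin d)) =>
        ‖Complex.exp (-b * ((‖p.1‖:ℂ)^2) + 0 * ((inner ℝ (0:EuclideanSpace ℝ (Fin d)) p.1 : ℝ):ℂ))‖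
          * ‖f p.2‖) (volume.prod volume) :=
      hGauss.mul_prod (f.integrable.norm)
    refine hbd.mono' ?_ (Filter.Eventually.of_forall fun p => ?_)
    · apply Continuous.aestronglyMeasurable
      apply Continuous.mul ?_ (f.continuous.comp continuous_snd)
      apply Complex.continuous_exp.comp
      apply Continuous.add
      · exact (continuous_const.mul (Complex.continuous_ofReal.comp
          ((continuous_norm.comp continuous_fst).pow 2)))
      · exact continuous_const.mul (Complex.continuous_ofReal.comp
          ((continuous_const.sub continuous_snd).inner continuous_fst))
    · simp only [Function.uncurry, norm_mul]
      gcongr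
      simp only [Complex.norm_exp]
      apply Real.exp_le_exp.2
      simp [Complex.add_re, Complex.mul_re]
  calc (∫ ξ : EuclideanSpace ℝ (Fin d), ∫ y : EuclideanSpace ℝ (Fin d),
          Complex.exp (-b * ((‖ξ‖^2 : ℝ):ℂ) + Complex.I * ((inner ℝ (x - y) ξ : ℝ):ℂ)) * f y)
      = ∫ y : EuclideanSpace ℝ (Fin d), ∫ ξ : EuclideanSpace ℝ (Fin d),
          Complex.exp (-b * ((‖ξ‖^2 : ℝ):ℂ) + Complex.I * ((inner ℝ (x - y) ξ : ℝ):ℂ)) * f y :=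
        integral_integral_swap hint
    _ = ∫ y : EuclideanSpace ℝ (Fin d),
          (((Real.pi : ℂ) / b) ^ ((d:ℂ) / 2) * Complex.exp (Complex.I^2 * ((‖x - y‖^2 : ℝ):ℂ) / (4*b))) * f y := by
        refine integral_congr_ae (Filter.Eventually.of_forall fun y => ?_)
        simp only [integral_mul_const]
        congr 1
        have := GaussianFourier.integral_cexp_neg_mul_sq_norm_add
          (V := EuclideanSpace ℝ (Fin d)) hb Complex.I (x - y)
        simp only [finrank_euclideanSpace_fin] at this
        push_cast at this ⊢
        rw [this]
    _ = _ := by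
        rw [← integral_const_mul]
        refine integral_congr_ae (Filter.Eventually.of_forall fun y => ?_)
        simp only []
        ring

lemma cpow_polar (r : ℝ) (hr : 0 < r) (ε : ℝ) (u : ℂ) (hu : Complex.arg u = ε)
    (habs : ‖u‖ = 1) (w : ℝ) :
    ((r:ℂ) * u) ^ ((w:ℝ):ℂ) = ((r ^ w : ℝ):ℂ) * Complex.exp (((ε * w : ℝ):ℂ) * Complex.I) := by
  have hu0 : u ≠ 0 := by
    intro h; rw [h] at habs; simp at habs
  have hz0 : (r:ℂ)*u ≠ 0 := mul_ne_zero (by exact_mod_cast hr.ne') hu0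
  rw [Complex.cpow_def_of_ne_zero hz0]
  have hlog : Complex.log ((r:ℂ)*u) = ((Real.log r : ℝ):ℂ) + ((ε:ℝ):ℂ) * Complex.I := by
    apply Complex.ext
    · rw [Complex.log_re]
      simp [map_mul, Complex.norm_real, abs_of_pos hr, habs]
    · rw [Complex.log_im, Complex.arg_real_mul u hr, hu]
      simp
  rw [hlog, add_mul, Complex.exp_add, Real.rpow_def_of_pos hr, Complex.ofReal_exp]
  push_cast
  ring_nf

lemma rpow_combine {s : ℝ} (hs : 0 < s) (dd : ℝ) :
    (2*Real.pi) ^ (-dd/2) * (Real.pi/s) ^ (dd/2) = (2*s) ^ (-dd/2) := by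
  have h1 : Real.pi/s = (2*Real.pi)/(2*s) := by
    rw [mul_div_mul_left _ _ (two_ne_zero)]
  rw [h1, Real.div_rpow (by positivity) (by positivity), neg_div, Real.rpow_neg (by positivity),
    Real.rpow_neg (by positivity)]
  field_simp

lemma const_lemma (d : ℕ) {t : ℝ} (ht : t ≠ 0) :
    (((2*Real.pi) ^ (-(d:ℝ)/2) : ℝ) : ℂ) * ((Real.pi : ℂ)/(Complex.I*(t:ℂ))) ^ ((d:ℂ)/2)
      = (((2*|t|) ^ (-(d:ℝ)/2) : ℝ):ℂ) *
        Complex.exp (-Complex.I * ((Real.sign t : ℝ):ℂ) * (d:ℂ) * (Real.pi:ℂ) / 4) := by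
  have hw : ((d:ℂ)/2) = (((d:ℝ)/2 : ℝ):ℂ) := by push_cast; ring
  rcases ht.lt_or_gt with htneg | htpos
  · have hr : 0 < Real.pi / (-t) := div_pos Real.pi_pos (by linarith)
    have hval : ((Real.pi:ℂ) / (Complex.I*(t:ℂ)) : ℂ) = ((Real.pi/(-t) : ℝ):ℂ) * Complex.I := by
      rw [div_eq_mul_inv, mul_inv, Complex.inv_I]
      push_cast
      field_simp
    rw [hval, hw, cpow_polar _ hr _ _ Complex.arg_I (by simp) _, ← mul_assoc, ← Complex.ofReal_mul]
    have : (2*Real.pi) ^ (-(d:ℝ)/2) * (Real.pi/(-t)) ^ ((d:ℝ)/2) = (2*|t|) ^ (-(d:ℝ)/2) := by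
      rw [abs_of_neg htneg]
      exact rpow_combine (by linarith) d
    rw [this]
    congr 1
    rw [Real.sign_of_neg htneg]
    push_cast
    ring
  · have hr : 0 < Real.pi / t := div_pos Real.pi_pos htpos
    have hval : ((Real.pi:ℂ) / (Complex.I*(t:ℂ)) : ℂ) = ((Real.pi/t : ℝ):ℂ) * (-Complex.I) := by
      rw [div_eq_mul_inv, mul_inv, Complex.inv_I]
      push_cast
      field_simp
    rw [hval, hw, cpow_polar _ hr _ _ Complex.arg_neg_I (by simp) _, ← mul_assoc,
      ← Complex.ofReal_mul]
    have : (2*Real.pi) ^ (-(d:ℝ)/2) * (Real.pi/t) ^ ((d:ℝ)/2) = (2*|t|) ^ (-(d:ℝ)/2) := by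
      rw [abs_of_pos htpos]
      exact rpow_combine htpos d
    rw [this]
    congr 1
    rw [Real.sign_of_pos htpos]
    push_cast
    ring

end SchrodingerAux

open SchrodingerAux in
/-- The factorization `e^{itΔ} = M(t) D(t) 𝓕 M(t)`:
`(e^{itΔ}f)(x) = (2it)^{-d/2} e^{i|x|²/(4t)} 𝓕(e^{i|·|²/(4t)} f)(x/(2t))`, with
`(2it)^{-d/2} = (2|t|)^{-d/2} e^{-i·sgn(t)·dπ/4}`. -/
theorem schrodingerProp_factorization
    (d : ℕ) (t : ℝ) (ht : t ≠ 0) (f : SchwartzMap (EuclideanSpace ℝ (Fin d)) ℂ)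
    (x : EuclideanSpace ℝ (Fin d)) :
    schrodingerProp t (⇑f) x
      = (((2 * |t|) ^ (-(d : ℝ) / 2) : ℝ) : ℂ) *
          Complex.exp (-Complex.I * (Real.sign t : ℂ) * (d : ℂ) * (Real.pi : ℂ) / 4) *
          (Complex.exp (Complex.I * ((‖x‖ ^ 2 : ℝ) : ℂ) / (4 * (t : ℂ))) *
            fourierT (fun y => Complex.exp (Complex.I * ((‖y‖ ^ 2 : ℝ) : ℂ) / (4 * (t : ℂ))) * f y)
              ((2 * t)⁻¹ • x)) := by
  have hIt : (Complex.I * (t:ℂ)) ≠ 0 :=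
    mul_ne_zero Complex.I_ne_zero (Complex.ofReal_ne_zero.2 ht)
  set C : ℂ := (((2 * Real.pi) ^ (-(d : ℝ) / 2) : ℝ) : ℂ) with hCdef
  have hC0 : C ≠ 0 := by
    rw [hCdef]
    exact_mod_cast (Real.rpow_pos_of_pos (by positivity) _).ne'
  set bs : ℕ → ℂ := fun n => ((((n:ℝ)+1)⁻¹ : ℝ) : ℂ) + Complex.I * (t:ℂ) with hbs
  have hre : ∀ n, 0 < (bs n).re := by
    intro n
    have : (bs n).re = ((n:ℝ)+1)⁻¹ := by
      simp [hbs, Complex.add_re, Complex.mul_re, -Complex.ofReal_inv]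
    rw [this]
    positivity
  have hlim : Tendsto bs atTop (𝓝 (Complex.I * (t:ℂ))) := by
    have h1 : Tendsto (fun n : ℕ => ((n:ℝ)+1)⁻¹) atTop (𝓝 0) := by
      simpa [one_div] using tendsto_one_div_add_atTop_nhds_zero_nat (𝕜 := ℝ)
    have h2 : Tendsto (fun n : ℕ => ((((n:ℝ)+1)⁻¹ : ℝ) : ℂ)) atTop (𝓝 0) := by
      rw [show ((0:ℂ)) = ((0:ℝ):ℂ) by norm_num]
      exact (Complex.continuous_ofReal.tendsto 0).comp h1
    have h3 := h2.add_const (Complex.I * (t:ℂ))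
    simp only [zero_add] at h3
    exact h3
  -- dominated convergence for the ξ-integral
  have hDCT1 : Tendsto (fun n => ∫ ξ : EuclideanSpace ℝ (Fin d),
        Complex.exp (-(bs n) * ((‖ξ‖^2 : ℝ):ℂ) + Complex.I * ((inner ℝ x ξ : ℝ):ℂ)) * fourierT ⇑f ξ)
      atTop (𝓝 (∫ ξ : EuclideanSpace ℝ (Fin d),
        Complex.exp (-(Complex.I*(t:ℂ)) * ((‖ξ‖^2 : ℝ):ℂ) + Complex.I * ((inner ℝ x ξ : ℝ):ℂ)) *
          fourierT ⇑f ξ)) := by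
    apply tendsto_integral_filter_of_dominated_convergence
      (fun ξ : EuclideanSpace ℝ (Fin d) => ‖fourierT ⇑f ξ‖)
    · refine Filter.Eventually.of_forall fun n => Continuous.aestronglyMeasurable ?_
      apply Continuous.mul ?_ (fourierT_continuous f)
      apply Complex.continuous_exp.comp
      exact (continuous_const.mul (Complex.continuous_ofReal.comp (continuous_norm.pow 2))).add
        (continuous_const.mul (Complex.continuous_ofReal.comp
          (Continuous.inner continuous_const continuous_id)))
    · refine Filter.Eventually.of_forall fun n => Filter.Eventually.of_forall fun ξ => ?_
      rw [norm_mul]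
      have hone : ‖Complex.exp (-(bs n) * ((‖ξ‖^2 : ℝ):ℂ) + Complex.I * ((inner ℝ x ξ : ℝ):ℂ))‖ ≤ 1 := by
        rw [Complex.norm_exp]
        apply Real.exp_le_one_iff.2
        have hrey : (-(bs n) * ((‖ξ‖^2 : ℝ):ℂ) + Complex.I * ((inner ℝ x ξ : ℝ):ℂ)).re
            = -((bs n).re * ‖ξ‖^2) := by
          simp only [Complex.add_re, Complex.neg_re, Complex.mul_re, ← Complex.ofReal_pow,
            Complex.ofReal_re, Complex.ofReal_im, Complex.I_re, Complex.I_im]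
          ring
        rw [hrey]
        have h1 := (hre n).le
        nlinarith [sq_nonneg ‖ξ‖]
      calc ‖Complex.exp (-(bs n) * ((‖ξ‖^2 : ℝ):ℂ) + Complex.I * ((inner ℝ x ξ : ℝ):ℂ))‖ *
            ‖fourierT ⇑f ξ‖
          ≤ 1 * ‖fourierT ⇑f ξ‖ := mul_le_mul_of_nonneg_right hone (norm_nonneg _)
        _ = ‖fourierT ⇑f ξ‖ := one_mul _
    · exact (fourierT_integrable f).norm
    · refine Filter.Eventually.of_forall fun ξ => ?_
      apply Tendsto.mul ?_ tendsto_const_nhds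
      apply (Complex.continuous_exp.tendsto _).comp
      exact ((hlim.neg.mul_const _).add_const _)
  -- dominated convergence for the y-integral
  have hDCT2 : Tendsto (fun n => ∫ y : EuclideanSpace ℝ (Fin d),
        Complex.exp (Complex.I^2 * ((‖x - y‖^2 : ℝ):ℂ) / (4*(bs n))) * f y)
      atTop (𝓝 (∫ y : EuclideanSpace ℝ (Fin d),
        Complex.exp (Complex.I^2 * ((‖x - y‖^2 : ℝ):ℂ) / (4*(Complex.I*(t:ℂ)))) * f y)) := by
    apply tendsto_integral_filter_of_dominated_convergence
      (fun y : EuclideanSpace ℝ (Fin d) => ‖f y‖)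
    · refine Filter.Eventually.of_forall fun n => Continuous.aestronglyMeasurable ?_
      apply Continuous.mul ?_ f.continuous
      apply Complex.continuous_exp.comp
      apply Continuous.div_const
      exact continuous_const.mul (Complex.continuous_ofReal.comp
        ((continuous_const.sub continuous_id).norm.pow 2))
    · refine Filter.Eventually.of_forall fun n => Filter.Eventually.of_forall fun y => ?_
      rw [norm_mul]
      have hone : ‖Complex.exp (Complex.I^2 * ((‖x - y‖^2 : ℝ):ℂ) / (4*(bs n)))‖ ≤ 1 := by
        rw [Complex.norm_exp]
        apply Real.exp_le_one_iff.2
        have hrey : (Complex.I^2 * ((‖x - y‖^2 : ℝ):ℂ) / (4*(bs n))).re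
            = -(‖x - y‖^2 * ((4*(bs n))⁻¹).re) := by
          rw [Complex.I_sq, div_eq_mul_inv]
          simp only [Complex.mul_re, Complex.neg_re, Complex.neg_im, Complex.one_re,
            Complex.one_im, ← Complex.ofReal_pow, neg_one_mul, ← Complex.ofReal_neg,
            Complex.ofReal_re, Complex.ofReal_im, neg_zero, zero_mul, mul_zero, sub_zero]
          ring
        rw [hrey]
        have h1 : 0 ≤ ((4*(bs n))⁻¹).re := by
          rw [Complex.inv_re]
          apply div_nonneg ?_ (Complex.normSq_nonneg _)
          have : (4*(bs n)).re = 4*(bs n).re := by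
            simp [Complex.mul_re]
          rw [this]
          linarith [(hre n)]
        nlinarith [sq_nonneg ‖x - y‖]
      calc ‖Complex.exp (Complex.I^2 * ((‖x - y‖^2 : ℝ):ℂ) / (4*(bs n)))‖ * ‖f y‖
          ≤ 1 * ‖f y‖ := mul_le_mul_of_nonneg_right hone (norm_nonneg _)
        _ = ‖f y‖ := one_mul _
    · exact f.integrable.norm
    · refine Filter.Eventually.of_forall fun y => ?_
      apply Tendsto.mul ?_ tendsto_const_nhds
      apply (Complex.continuous_exp.tendsto _).comp
      exact Filter.Tendsto.div tendsto_const_nhds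
        (tendsto_const_nhds.mul hlim) (by simpa using hIt)
  -- the coefficient limit
  have hcoef : Tendsto (fun n => ((Real.pi:ℂ)/(bs n)) ^ ((d:ℂ)/2)) atTop
      (𝓝 (((Real.pi:ℂ)/(Complex.I*(t:ℂ))) ^ ((d:ℂ)/2))) := by
    have h0 : Tendsto (fun n => (Real.pi:ℂ)/(bs n)) atTop (𝓝 ((Real.pi:ℂ)/(Complex.I*(t:ℂ)))) :=
      tendsto_const_nhds.div hlim hIt
    have hslit : ((Real.pi:ℂ)/(Complex.I*(t:ℂ))) ∈ Complex.slitPlane := by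
      apply Complex.mem_slitPlane_iff.2
      right
      rw [Complex.div_im]
      simp [Complex.normSq_apply]
      exact ht
    exact ((continuousAt_cpow_const hslit).tendsto).comp h0
  have h2 : Tendsto (fun n => ∫ ξ : EuclideanSpace ℝ (Fin d),
        Complex.exp (-(bs n) * ((‖ξ‖^2 : ℝ):ℂ) + Complex.I * ((inner ℝ x ξ : ℝ):ℂ)) * fourierT ⇑f ξ)
      atTop (𝓝 (C * (((Real.pi:ℂ)/(Complex.I*(t:ℂ))) ^ ((d:ℂ)/2) *
        ∫ y : EuclideanSpace ℝ (Fin d),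
          Complex.exp (Complex.I^2 * ((‖x - y‖^2 : ℝ):ℂ) / (4*(Complex.I*(t:ℂ)))) * f y))) := by
    refine Tendsto.congr (fun n => (step1 f x (hre n)).symm) ?_
    exact tendsto_const_nhds.mul (hcoef.mul hDCT2)
  have key : (∫ ξ : EuclideanSpace ℝ (Fin d),
        Complex.exp (-(Complex.I*(t:ℂ)) * ((‖ξ‖^2 : ℝ):ℂ) + Complex.I * ((inner ℝ x ξ : ℝ):ℂ)) *
          fourierT ⇑f ξ)
      = C * (((Real.pi:ℂ)/(Complex.I*(t:ℂ))) ^ ((d:ℂ)/2) *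
        ∫ y : EuclideanSpace ℝ (Fin d),
          Complex.exp (Complex.I^2 * ((‖x - y‖^2 : ℝ):ℂ) / (4*(Complex.I*(t:ℂ)))) * f y) :=
    tendsto_nhds_unique hDCT1 h2
  -- rewrite the LHS
  have hL : schrodingerProp t (⇑f) x = C * ∫ ξ : EuclideanSpace ℝ (Fin d),
      Complex.exp (-(Complex.I*(t:ℂ)) * ((‖ξ‖^2 : ℝ):ℂ) + Complex.I * ((inner ℝ x ξ : ℝ):ℂ)) *
        fourierT ⇑f ξ := by
    rw [schrodingerProp, invFourierT]
    congr 1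
    refine integral_congr_ae (Filter.Eventually.of_forall fun ξ => ?_)
    simp only [← mul_assoc, ← Complex.exp_add]
    congr 2
    ring
  -- split the Gaussian kernel
  have hBsplit : (∫ y : EuclideanSpace ℝ (Fin d),
        Complex.exp (Complex.I^2 * ((‖x - y‖^2 : ℝ):ℂ) / (4*(Complex.I*(t:ℂ)))) * f y)
      = Complex.exp (Complex.I * ((‖x‖^2 : ℝ):ℂ) / (4 * (t:ℂ))) *
          ∫ y : EuclideanSpace ℝ (Fin d),
            Complex.exp (-Complex.I * ((inner ℝ y ((2*t)⁻¹ • x) : ℝ):ℂ)) *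
              (Complex.exp (Complex.I * ((‖y‖^2 : ℝ):ℂ) / (4 * (t:ℂ))) * f y) := by
    rw [← integral_const_mul]
    refine integral_congr_ae (Filter.Eventually.of_forall fun y => ?_)
    simp only [← mul_assoc, ← Complex.exp_add]
    congr 2
    rw [real_inner_smul_right, real_inner_comm,
      show ‖x - y‖^2 = ‖x‖^2 - 2*(inner ℝ x y:ℝ) + ‖y‖^2 from norm_sub_sq_real x y]
    push_cast
    rw [Complex.I_sq]
    field_simp
    ring_nf
    simp [Complex.I_sq]
    ring
  have hJ : (∫ y : EuclideanSpace ℝ (Fin d),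
        Complex.exp (-Complex.I * ((inner ℝ y ((2*t)⁻¹ • x) : ℝ):ℂ)) *
          (Complex.exp (Complex.I * ((‖y‖^2 : ℝ):ℂ) / (4 * (t:ℂ))) * f y))
      = C⁻¹ * fourierT (fun y => Complex.exp (Complex.I * ((‖y‖ ^ 2 : ℝ) : ℂ) / (4 * (t : ℂ))) * f y)
          ((2 * t)⁻¹ • x) := by
    rw [fourierT, ← mul_assoc, inv_mul_cancel₀ hC0, one_mul]
  rw [hL, key, hBsplit, hJ]
  have hconst := const_lemma d ht
  rw [hCdef] at *
  calc (((2 * Real.pi) ^ (-(d : ℝ) / 2) : ℝ) : ℂ) *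
        ((((2 * Real.pi) ^ (-(d : ℝ) / 2) : ℝ) : ℂ) * (((Real.pi:ℂ)/(Complex.I*(t:ℂ))) ^ ((d:ℂ)/2) *
          (Complex.exp (Complex.I * ((‖x‖^2 : ℝ):ℂ) / (4 * (t:ℂ))) *
            ((((2 * Real.pi) ^ (-(d : ℝ) / 2) : ℝ) : ℂ)⁻¹ *
              fourierT (fun y => Complex.exp (Complex.I * ((‖y‖ ^ 2 : ℝ) : ℂ) / (4 * (t : ℂ))) * f y)
                ((2 * t)⁻¹ • x)))))
      = ((((2 * Real.pi) ^ (-(d : ℝ) / 2) : ℝ) : ℂ) * (((Real.pi:ℂ)/(Complex.I*(t:ℂ))) ^ ((d:ℂ)/2))) *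
          (Complex.exp (Complex.I * ((‖x‖^2 : ℝ):ℂ) / (4 * (t:ℂ))) *
            fourierT (fun y => Complex.exp (Complex.I * ((‖y‖ ^ 2 : ℝ) : ℂ) / (4 * (t : ℂ))) * f y)
              ((2 * t)⁻¹ • x)) := by
        field_simp
    _ = _ := by rw [hconst]

end
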